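/- The sylvester classes are the fibers of binary search tree insertion: for all words u, v over the positive integers, u ≡_sylv v if and only if the binary search trees obtained by inserting the letters of u and of v from right to left are equal. -/

import Mathlib

open scoped Classical

/-- Words over the positive integers. -/
abbrev Word : Type := List ℕ+

/-- Evaluation of a word: number of occurrences of each letter. -/
def ev (w : Word) : ℕ+ → ℕ := fun a => w.count a

/-- A monoid congruence on the free monoid `(ℕ⁺)*`. -/
def IsCongruence (r : Word → Word → Prop) : Prop :=
  Equivalence r ∧ ∀ u v u' v', r u v → r u' v' → r (u ++ u') (v ++ v')

/-- Restriction of a word to the letters belonging to a set `I`. -/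
noncomputable def restrictTo (I : Set ℕ+) (w : Word) : Word :=
  w.filter fun a => decide (a ∈ I)

/-- `I` is an interval (order-convex subset) of `ℕ⁺`. -/
def IsIntervalSet (I : Set ℕ+) : Prop :=
  ∀ ⦃a b c : ℕ+⦄, a ∈ I → c ∈ I → a ≤ b → b ≤ c → b ∈ I

/-- Compatibility with restriction to alphabet intervals. -/
def CompatRestrict (r : Word → Word → Prop) : Prop :=
  ∀ I : Set ℕ+, IsIntervalSet I → ∀ u v, r u v → r (restrictTo I u) (restrictTo I v)

/-- `r` is a `φ`-congruence. -/
def IsPhiCongruence (φ : Word → Word) (r : Word → Word → Prop) : Prop :=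
  ∀ u v, r u v ↔ (r (φ u) (φ v) ∧ ev u = ev v)

/-- Standardization. -/
def std (w : Word) : Word :=
  (List.range w.length).map fun i =>
    ⟨((List.range w.length).countP fun j =>
        decide (w.getD j 1 < w.getD i 1 ∨ (w.getD j 1 = w.getD i 1 ∧ j < i))) + 1,
      Nat.succ_pos _⟩

/-- Packing. -/
def pack (w : Word) : Word :=
  w.map fun a => ⟨(w.dedup.countP fun b => decide (b < a)) + 1, Nat.succ_pos _⟩

theorem parkBad_ex (w : Word) :
    ∃ d : ℕ, 1 ≤ d ∧ (w.countP fun a : ℕ+ => decide ((a : ℕ) ≤ d)) < d :=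
  ⟨w.length + 1, Nat.succ_le_succ (Nat.zero_le _), by
    have h : (w.countP fun a : ℕ+ => decide ((a : ℕ) ≤ w.length + 1)) ≤ w.length :=
      List.countP_le_length
    omega⟩

/-- The smallest `d ≥ 1` such that fewer than `d` letters of `w` are `≤ d`. -/
noncomputable def parkBad (w : Word) : ℕ := Nat.find (parkBad_ex w)

/-- One pass of the parkization procedure, with fuel. -/
noncomputable def parkAux : ℕ → Word → Word
  | 0, w => w
  | f + 1, w =>
    if parkBad w ≤ w.length then
      parkAux f (w.map fun a : ℕ+ => if parkBad w < (a : ℕ) then (a - 1 : ℕ+) else a)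
    else w

/-- Parkization. The fuel `(sum of the letters)` always suffices,
since every pass strictly decreases the sum of the letters. -/
noncomputable def park (w : Word) : Word := parkAux (w.map fun a => (a : ℕ)).sum w

/-- Smallest monoid congruence containing `base`. -/
def CongClosure (base : Word → Word → Prop) (u v : Word) : Prop :=
  ∀ r : Word → Word → Prop, IsCongruence r → (∀ x y, base x y → r x y) → r u v

def sylvBase (x y : Word) : Prop :=
  ∃ (a b c : ℕ+) (v : Word), a ≤ b ∧ b < c ∧
    x = a :: c :: (v ++ [b]) ∧ y = c :: a :: (v ++ [b])

/-- The sylvester congruence. -/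
def sylv : Word → Word → Prop := CongClosure sylvBase

def stalBase (x y : Word) : Prop :=
  ∃ (a b : ℕ+) (v : Word), x = b :: a :: (v ++ [b]) ∧ y = a :: b :: (v ++ [b])

/-- The stalactic congruence. -/
def stal : Word → Word → Prop := CongClosure stalBase

def sylvSharpBase (x y : Word) : Prop :=
  ∃ (a b c : ℕ+) (v : Word), a < b ∧ b ≤ c ∧
    x = b :: (v ++ [a, c]) ∧ y = b :: (v ++ [c, a])

/-- The #-sylvester congruence. -/
def sylvSharp : Word → Word → Prop := CongClosure sylvSharpBase

/-- The taïga congruence: join of the sylvester and stalactic congruences. -/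
def taiga : Word → Word → Prop := CongClosure fun u v => sylv u v ∨ stal u v

/-- Planar binary trees with letter labels. -/
inductive BT : Type where
  | leaf : BT
  | node : BT → ℕ+ → BT → BT
deriving DecidableEq

/-- Binary search tree insertion of a letter. -/
def BT.insert : BT → ℕ+ → BT
  | .leaf, l => .node .leaf l .leaf
  | .node L b R, l => if l ≤ b then .node (L.insert l) b R else .node L b (R.insert l)

/-- Binary search tree of a word: insert the letters from right to left. -/
def bst (w : Word) : BT := w.foldr (fun l t => t.insert l) .leaf

/-- Planar binary trees labelled by a letter and a multiplicity. -/
inductive BSTM : Type where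
  | leaf : BSTM
  | node : BSTM → ℕ+ → ℕ+ → BSTM → BSTM   -- left, letter, multiplicity, right
deriving DecidableEq

/-- Insertion of a letter into a binary search tree with multiplicities. -/
def BSTM.insert : BSTM → ℕ+ → BSTM
  | .leaf, l => .node .leaf l 1 .leaf
  | .node L l' k R, l =>
    if l = l' then .node L l' (k + 1) R
    else if l < l' then .node (L.insert l) l' k R
    else .node L l' k (R.insert l)

/-- The `P`-symbol: insert the letters of `w` from right to left. -/
def Pmap (w : Word) : BSTM := w.foldr (fun l t => t.insert l) .leaf

/-- Letters of a BSTM in left-to-right (infix) order. -/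
def BSTM.letters : BSTM → List ℕ+
  | .leaf => []
  | .node L l _ R => L.letters ++ l :: R.letters

/-- The binary search tree property for a BSTM. -/
def BSTM.IsSearchTree : BSTM → Prop
  | .leaf => True
  | .node L l _ R =>
      (∀ x ∈ L.letters, x < l) ∧ (∀ x ∈ R.letters, l < x) ∧
        L.IsSearchTree ∧ R.IsSearchTree

/-- Total multiplicity of a letter in a BSTM. -/
def BSTM.mult : BSTM → ℕ+ → ℕ
  | .leaf, _ => 0
  | .node L l k R, a => L.mult a + (if a = l then (k : ℕ) else 0) + R.mult a

/-- Size of a BSTM: sum of the multiplicities. -/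
def BSTM.size : BSTM → ℕ
  | .leaf => 0
  | .node L _ k R => L.size + (k : ℕ) + R.size

/-- Planar binary trees with multiplicities. -/
inductive BTM : Type where
  | leaf : BTM
  | node : BTM → ℕ+ → BTM → BTM
deriving DecidableEq

/-- Size of a BTM: sum of the multiplicities. -/
def BTM.size : BTM → ℕ
  | .leaf => 0
  | .node L k R => L.size + (k : ℕ) + R.size

/-- Number of nodes of a BTM. -/
def BTM.numNodes : BTM → ℕ
  | .leaf => 0
  | .node L _ R => L.numNodes + 1 + R.numNodes

/-- Forgetting the letters of a BSTM gives a BTM. -/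
def forgetLetters : BSTM → BTM
  | .leaf => .leaf
  | .node L _ k R => .node (forgetLetters L) k (forgetLetters R)

/-- The `B`-symbol: the BTM underlying `P(w)`. -/
def Bmap (w : Word) : BTM := forgetLetters (Pmap w)

/-- A packed word: its set of letters is `{1, …, k}` for some `k`. -/
def IsPacked (w : Word) : Prop := ∀ a ∈ w, ∀ b : ℕ+, b ≤ a → b ∈ w

/-- Number of packed words inserting to the BTM `T`. -/
noncomputable def fT (T : BTM) : ℕ :=
  Set.ncard {w : Word | IsPacked w ∧ Bmap w = T}

/-- The hook-type product over the subtrees of a BTM. -/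
def hookProd : BTM → ℕ
  | .leaf => 1
  | .node L k R =>
      (BTM.node L k R).size * ((k : ℕ) - 1).factorial * hookProd L * hookProd R

/-- Label the nodes of a BTM in infix order starting from a given letter;
returns the labelled tree and the next unused letter. -/
def infixLabelAux : BTM → ℕ+ → BSTM × ℕ+
  | .leaf, n => (.leaf, n)
  | .node L k R, n =>
    let p := infixLabelAux L n
    let q := infixLabelAux R (p.2 + 1)
    (.node p.1 p.2 k q.1, q.2)

/-- Label the nodes of a BTM by `1, …, k` in infix order. -/
def infixLabel (T : BTM) : BSTM := (infixLabelAux T 1).1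

namespace SylvProof

/-- Letters of a BT in infix order. -/
def BT.letters : BT → List ℕ+
  | .leaf => []
  | .node L b R => BT.letters L ++ b :: BT.letters R

/-- Binary search tree property for BT (duplicates go left). -/
def BT.IsBST : BT → Prop
  | .leaf => True
  | .node L b R =>
      (∀ x ∈ BT.letters L, x ≤ b) ∧ (∀ x ∈ BT.letters R, b < x) ∧
        BT.IsBST L ∧ BT.IsBST R

lemma mem_letters_insert (t : BT) (l x : ℕ+) :
    x ∈ BT.letters (t.insert l) ↔ x = l ∨ x ∈ BT.letters t := by
  induction t with
  | leaf => simp [BT.insert, BT.letters]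
  | node L b R ihL ihR =>
      by_cases h : l ≤ b <;>
        simp [BT.insert, BT.letters, h, ihL, ihR] <;> tauto

lemma isBST_insert (t : BT) (ht : BT.IsBST t) (l : ℕ+) : BT.IsBST (t.insert l) := by
  induction t with
  | leaf => exact ⟨by simp [BT.letters], by simp [BT.letters], trivial, trivial⟩
  | node L b R ihL ihR =>
      obtain ⟨h1, h2, h3, h4⟩ := ht
      by_cases h : l ≤ b
      · show BT.IsBST (if l ≤ b then BT.node (L.insert l) b R else BT.node L b (R.insert l))
        rw [if_pos h]
        refine ⟨?_, h2, ihL h3, h4⟩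
        intro x hx
        rcases (mem_letters_insert L l x).1 hx with rfl | hx
        · exact h
        · exact h1 x hx
      · show BT.IsBST (if l ≤ b then BT.node (L.insert l) b R else BT.node L b (R.insert l))
        rw [if_neg h]
        refine ⟨h1, ?_, h3, ihR h4⟩
        intro x hx
        rcases (mem_letters_insert R l x).1 hx with rfl | hx
        · exact lt_of_not_ge h
        · exact h2 x hx

lemma isBST_bst (w : Word) : BT.IsBST (bst w) := by
  induction w with
  | nil => trivial
  | cons a w ih => exact isBST_insert _ ih a

lemma mem_letters_bst (w : Word) (x : ℕ+) (hx : x ∈ w) : x ∈ BT.letters (bst w) := by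
  induction w with
  | nil => simp at hx
  | cons a w ih =>
      show x ∈ BT.letters ((bst w).insert a)
      rw [mem_letters_insert]
      rcases List.mem_cons.1 hx with rfl | hx
      · exact Or.inl rfl
      · exact Or.inr (ih hx)

/-- Inserting `a` and `c` commute as soon as the tree contains a letter `y`
with `a ≤ y < c`. -/
lemma insert_comm (t : BT) (ht : BT.IsBST t) (y a c : ℕ+)
    (hy : y ∈ BT.letters t) (hay : a ≤ y) (hyc : y < c) :
    (t.insert c).insert a = (t.insert a).insert c := by
  induction t with
  | leaf => simp [BT.letters] at hy
  | node L b R ihL ihR =>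
      obtain ⟨h1, h2, h3, h4⟩ := ht
      by_cases hc : c ≤ b
      · have ha : a ≤ b := le_trans hay (le_trans hyc.le hc)
        have hyL : y ∈ BT.letters L := by
          have hyb : y < b := lt_of_lt_of_le hyc hc
          rcases List.mem_append.1 hy with h | h
          · exact h
          · rcases List.mem_cons.1 h with rfl | h
            · exact absurd hyb (lt_irrefl _)
            · exact absurd (h2 y h) (not_lt_of_ge hyb.le)
        simp [BT.insert, hc, ha, ihL h3 hyL]
      · by_cases ha : a ≤ b
        · simp [BT.insert, hc, ha]
        · have hyR : y ∈ BT.letters R := by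
            have hby : b < y := lt_of_lt_of_le (lt_of_not_ge ha) hay
            rcases List.mem_append.1 hy with h | h
            · exact absurd (h1 y h) (not_le_of_gt hby)
            · rcases List.mem_cons.1 h with rfl | h
              · exact absurd hby (lt_irrefl _)
              · exact h
          simp [BT.insert, hc, ha, ihR h4 hyR]

abbrev ins : ℕ+ → BT → BT := fun l t => t.insert l

lemma bst_append (u s : Word) : bst (u ++ s) = u.foldr ins (bst s) :=
  List.foldr_append

lemma foldr_gt (s : Word) (L R : BT) (b : ℕ+) (hs : ∀ x ∈ s, b < x) :
    s.foldr ins (.node L b R) = .node L b (s.foldr ins R) := by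
  induction s with
  | nil => rfl
  | cons x s ih =>
      have hx : b < x := hs x (List.mem_cons_self)
      have hrest : ∀ y ∈ s, b < y := fun y hy => hs y (List.mem_cons_of_mem _ hy)
      show ((x :: s : Word).foldr ins (.node L b R)) = _
      rw [List.foldr_cons, ih hrest]
      show BT.insert _ _ = _
      simp [BT.insert, not_le_of_gt hx]

lemma foldr_le (s : Word) (L R : BT) (b : ℕ+) (hs : ∀ x ∈ s, x ≤ b) :
    s.foldr ins (.node L b R) = .node (s.foldr ins L) b R := by
  induction s with
  | nil => rfl
  | cons x s ih =>
      have hx : x ≤ b := hs x (List.mem_cons_self)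
      have hrest : ∀ y ∈ s, y ≤ b := fun y hy => hs y (List.mem_cons_of_mem _ hy)
      show ((x :: s : Word).foldr ins (.node L b R)) = _
      rw [List.foldr_cons, ih hrest]
      show BT.insert _ _ = _
      simp [BT.insert, hx]

/-- Canonical (postorder) reading of a tree. -/
def readBT : BT → Word
  | .leaf => []
  | .node L b R => readBT L ++ readBT R ++ [b]

lemma mem_readBT (t : BT) (x : ℕ+) : x ∈ readBT t ↔ x ∈ BT.letters t := by
  induction t with
  | leaf => simp [readBT, BT.letters]
  | node L b R ihL ihR => simp [readBT, BT.letters, ihL, ihR]; tauto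

lemma bst_readBT (t : BT) (ht : BT.IsBST t) : bst (readBT t) = t := by
  induction t with
  | leaf => rfl
  | node L b R ihL ihR =>
      obtain ⟨h1, h2, h3, h4⟩ := ht
      show bst ((readBT L ++ readBT R) ++ [b]) = _
      rw [List.append_assoc, bst_append, bst_append]
      have hb : bst [b] = BT.node .leaf b .leaf := rfl
      rw [hb, foldr_gt _ _ _ _ (fun x hx => h2 x ((mem_readBT R x).1 hx))]
      rw [foldr_le _ _ _ _ (fun x hx => h1 x ((mem_readBT L x).1 hx))]
      show BT.node (bst (readBT L)) b (bst (readBT R)) = _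
      rw [ihL h3, ihR h4]

-- Basic facts about the sylvester congruence.

lemma sylv_refl (u : Word) : sylv u u := fun _ hr _ => hr.1.refl u

lemma sylv_symm {u v : Word} (h : sylv u v) : sylv v u :=
  fun r hr hb => hr.1.symm (h r hr hb)

lemma sylv_trans {u v w : Word} (h1 : sylv u v) (h2 : sylv v w) : sylv u w :=
  fun r hr hb => hr.1.trans (h1 r hr hb) (h2 r hr hb)

lemma sylv_append {u v u' v' : Word} (h1 : sylv u v) (h2 : sylv u' v') :
    sylv (u ++ u') (v ++ v') :=
  fun r hr hb => hr.2 u v u' v' (h1 r hr hb) (h2 r hr hb)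

lemma sylv_of_base {u v : Word} (h : sylvBase u v) : sylv u v :=
  fun _ _ hb => hb u v h

lemma sylv_cons {u v : Word} (a : ℕ+) (h : sylv u v) : sylv (a :: u) (a :: v) :=
  sylv_append (u := [a]) (v := [a]) (sylv_refl [a]) h

/-- Shifting a big letter to the right past small letters, in a word ending
with a middle letter. -/
lemma sylv_shift (b a : ℕ+) (hba : b < a) :
    ∀ (p q : Word), (∀ x ∈ p, x ≤ b) →
      sylv (a :: (p ++ q ++ [b])) (p ++ (a :: q) ++ [b]) := by
  intro p
  induction p with
  | nil => intro q _; simpa using sylv_refl (a :: q ++ [b])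
  | cons x p ih =>
      intro q hp
      have hx : x ≤ b := hp x (List.mem_cons_self)
      have hbase : sylvBase (x :: a :: ((p ++ q) ++ [b])) (a :: x :: ((p ++ q) ++ [b])) :=
        ⟨x, b, a, p ++ q, hx, hba, rfl, rfl⟩
      have step1 : sylv (a :: (x :: p) ++ q ++ [b]) (x :: (a :: (p ++ q ++ [b]))) := by
        have := sylv_symm (sylv_of_base hbase)
        simpa [List.append_assoc] using this
      have step2 : sylv (x :: (a :: (p ++ q ++ [b]))) (x :: (p ++ (a :: q) ++ [b])) :=
        sylv_cons x (ih q fun y hy => hp y (List.mem_cons_of_mem _ hy))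
      have := sylv_trans step1 step2
      simpa [List.append_assoc] using this

/-- Inserting a letter is compatible with the canonical reading. -/
lemma sylv_insert_read (t : BT) (ht : BT.IsBST t) (a : ℕ+) :
    sylv (a :: readBT t) (readBT (t.insert a)) := by
  induction t with
  | leaf => exact sylv_refl [a]
  | node L b R ihL ihR =>
      obtain ⟨h1, h2, h3, h4⟩ := ht
      by_cases h : a ≤ b
      · have key : sylv ((a :: readBT L) ++ (readBT R ++ [b]))
            (readBT (L.insert a) ++ (readBT R ++ [b])) :=
          sylv_append (ihL h3) (sylv_refl _)
        have : readBT (BT.node L b R |>.insert a)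
            = readBT (L.insert a) ++ (readBT R ++ [b]) := by
          simp [BT.insert, h, readBT, List.append_assoc]
        rw [this]
        simpa [readBT, List.append_assoc] using key
      · have hba : b < a := lt_of_not_ge h
        have step1 : sylv (a :: (readBT L ++ readBT R ++ [b]))
            (readBT L ++ (a :: readBT R) ++ [b]) :=
          sylv_shift b a hba (readBT L) (readBT R)
            (fun x hx => h1 x ((mem_readBT L x).1 hx))
        have step2 : sylv (readBT L ++ ((a :: readBT R) ++ [b]))
            (readBT L ++ (readBT (R.insert a) ++ [b])) :=
          sylv_append (sylv_refl _) (sylv_append (ihR h4) (sylv_refl [b]))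
        have := sylv_trans (by simpa [List.append_assoc] using step1)
          step2
        have heq : readBT (BT.node L b R |>.insert a)
            = readBT L ++ (readBT (R.insert a) ++ [b]) := by
          simp [BT.insert, h, readBT, List.append_assoc]
        rw [heq]
        simpa [readBT, List.append_assoc] using this

lemma sylv_read_bst (w : Word) : sylv w (readBT (bst w)) := by
  induction w with
  | nil => exact sylv_refl []
  | cons a w ih =>
      have h1 : sylv (a :: w) (a :: readBT (bst w)) := sylv_cons a ih
      have h2 : sylv (a :: readBT (bst w)) (readBT ((bst w).insert a)) :=
        sylv_insert_read (bst w) (isBST_bst w) a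
      exact sylv_trans h1 h2

/-- The forward direction: the congruence `∀ w, bst (u ++ w) = bst (v ++ w)`. -/
lemma sylv_bst_eq {u v : Word} (h : sylv u v) : bst u = bst v := by
  have key := h (fun u v => ∀ w, bst (u ++ w) = bst (v ++ w))
    ⟨⟨fun _ _ => rfl, fun h w => (h w).symm, fun h1 h2 w => (h1 w).trans (h2 w)⟩,
      by
        intro u v u' v' h1 h2 w
        calc bst ((u ++ u') ++ w) = bst (u ++ (u' ++ w)) := by rw [List.append_assoc]
          _ = bst (v ++ (u' ++ w)) := h1 (u' ++ w)
          _ = v.foldr ins (bst (u' ++ w)) := bst_append _ _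
          _ = v.foldr ins (bst (v' ++ w)) := by rw [h2 w]
          _ = bst (v ++ (v' ++ w)) := (bst_append _ _).symm
          _ = bst ((v ++ v') ++ w) := by rw [List.append_assoc]⟩
    (by
      rintro x y ⟨a, b, c, s, hab, hbc, rfl, rfl⟩ w
      have hb : b ∈ BT.letters (bst ((s ++ [b]) ++ w)) :=
        mem_letters_bst _ b (by simp)
      have hbst : BT.IsBST (bst ((s ++ [b]) ++ w)) := isBST_bst _
      show bst (a :: c :: ((s ++ [b]) ++ w)) = bst (c :: a :: ((s ++ [b]) ++ w))
      show ((bst ((s ++ [b]) ++ w)).insert c).insert a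
          = ((bst ((s ++ [b]) ++ w)).insert a).insert c
      exact insert_comm _ hbst b a c hb hab hbc)
  simpa using key []

end SylvProof

theorem sylv_iff_bst_eq (u v : Word) : sylv u v ↔ bst u = bst v := by
  constructor
  · exact SylvProof.sylv_bst_eq
  · intro h
    have hu := SylvProof.sylv_read_bst u
    have hv := SylvProof.sylv_read_bst v
    rw [h] at hu
    exact SylvProof.sylv_trans hu (SylvProof.sylv_symm hv)
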